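/- Let E be a finite-dimensional real inner product space, S ∈ E fixed, and γ : [0,τ] → E a C¹ curve of the form γ(t) = S + V(t), where ⟨S, V(t)⟩ = 0 and ‖V(t)‖ = ρ > 0 for all t, and ‖γ'(t)‖ ≤ v. Then τ ≥ (ρ / v) · arccos(⟨V(0), V(τ)⟩ / ρ²). Moreover ⟨V(0), V(τ)⟩ = ⟨γ(0), γ(τ)⟩ − ‖S‖². -/

import Mathlib

open scoped InnerProductSpace

open Real Set

section Aux

variable {E : Type*} [NormedAddCommGroup E] [InnerProductSpace ℝ E]

/-- Chord–angle relation on the sphere of radius ρ. -/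
lemma chord_angle {ρ : ℝ} (hρ : 0 < ρ) (x z : E) (hx : ‖x‖ = ρ) (hz : ‖z‖ = ρ) :
    Real.arccos (⟪x, z⟫_ℝ / ρ ^ 2) = 2 * Real.arcsin (‖x - z‖ / (2 * ρ)) := by
  have hρ2 : (0:ℝ) < ρ ^ 2 := by positivity
  set c : ℝ := ⟪x, z⟫_ℝ / ρ ^ 2 with hc
  have habs : |⟪x, z⟫_ℝ| ≤ ρ ^ 2 := by
    have := abs_real_inner_le_norm x z
    rw [hx, hz] at this; nlinarith
  have hc1 : -1 ≤ c := by
    rw [hc, le_div_iff₀ hρ2]; cases' abs_le.mp habs with h1 h2; linarith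
  have hc2 : c ≤ 1 := by
    rw [hc, div_le_one hρ2]; cases' abs_le.mp habs with h1 h2; linarith
  set θ := Real.arccos c with hθdef
  have hθ0 : 0 ≤ θ := Real.arccos_nonneg c
  have hθπ : θ ≤ π := Real.arccos_le_pi c
  have hcos : Real.cos θ = c := Real.cos_arccos hc1 hc2
  have hsinhalf : 0 ≤ Real.sin (θ / 2) :=
    Real.sin_nonneg_of_nonneg_of_le_pi (by linarith) (by linarith [Real.pi_pos])
  have hhalf : Real.cos θ = 1 - 2 * Real.sin (θ / 2) ^ 2 := by
    have h2 : Real.cos (2 * (θ / 2)) = 1 - 2 * Real.sin (θ / 2) ^ 2 := by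
      rw [Real.cos_two_mul]
      have := Real.sin_sq_add_cos_sq (θ / 2); nlinarith
    rw [← h2]; ring_nf
  have hn2 : ‖x - z‖ ^ 2 = 2 * ρ ^ 2 - 2 * ⟪x, z⟫_ℝ := by
    rw [@norm_sub_sq_real, hx, hz]; ring
  have hinner : ⟪x, z⟫_ℝ = ρ ^ 2 * c := by rw [hc]; field_simp
  have hnormval : ‖x - z‖ = 2 * ρ * Real.sin (θ / 2) := by
    have hsq : ‖x - z‖ ^ 2 = (2 * ρ * Real.sin (θ / 2)) ^ 2 := by
      rw [hn2, hinner]; nlinarith [hhalf, hcos]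
    have h1 : 0 ≤ ‖x - z‖ := norm_nonneg _
    have h2 : 0 ≤ 2 * ρ * Real.sin (θ / 2) := by positivity
    nlinarith [sq_nonneg (‖x - z‖ - 2 * ρ * Real.sin (θ / 2)),
      sq_nonneg (‖x - z‖ + 2 * ρ * Real.sin (θ / 2))]
  rw [hnormval]
  have : 2 * ρ * Real.sin (θ / 2) / (2 * ρ) = Real.sin (θ / 2) := by field_simp
  rw [this, Real.arcsin_sin (by linarith [Real.pi_pos]) (by linarith)]
  ring

/-- Spherical triangle inequality for angles, in arccos form. -/
lemma arccos_triangle {ρ : ℝ} (hρ : 0 < ρ) (x y z : E)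
    (hx : ‖x‖ = ρ) (hy : ‖y‖ = ρ) (hz : ‖z‖ = ρ) :
    Real.arccos (⟪x, z⟫_ℝ / ρ ^ 2) ≤
      Real.arccos (⟪x, y⟫_ℝ / ρ ^ 2) + Real.arccos (⟪y, z⟫_ℝ / ρ ^ 2) := by
  have hρ2 : (0:ℝ) < ρ ^ 2 := by positivity
  set a : ℝ := ⟪x, y⟫_ℝ / ρ ^ 2 with hadef
  set b : ℝ := ⟪y, z⟫_ℝ / ρ ^ 2 with hbdef
  set c : ℝ := ⟪x, z⟫_ℝ / ρ ^ 2 with hcdef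
  have bound : ∀ (u w : E), ‖u‖ = ρ → ‖w‖ = ρ → |⟪u, w⟫_ℝ / ρ ^ 2| ≤ 1 := by
    intro u w hu hw
    have h := abs_real_inner_le_norm u w
    rw [hu, hw] at h
    rw [abs_div, abs_of_pos hρ2, div_le_one hρ2]
    nlinarith
  have ha := abs_le.mp (bound x y hx hy)
  have hb := abs_le.mp (bound y z hy hz)
  have hcc := abs_le.mp (bound x z hx hz)
  set θ1 := Real.arccos a with hθ1
  set θ2 := Real.arccos b with hθ2
  have hθ10 : 0 ≤ θ1 := Real.arccos_nonneg a
  have hθ1π : θ1 ≤ π := Real.arccos_le_pi a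
  have hθ20 : 0 ≤ θ2 := Real.arccos_nonneg b
  have hθ2π : θ2 ≤ π := Real.arccos_le_pi b
  by_cases hsum : π ≤ θ1 + θ2
  · exact le_trans (Real.arccos_le_pi c) (by linarith)
  push_neg at hsum
  -- key inequality : c ≥ cos (θ1 + θ2)
  have hcos1 : Real.cos θ1 = a := Real.cos_arccos ha.1 ha.2
  have hcos2 : Real.cos θ2 = b := Real.cos_arccos hb.1 hb.2
  have hsin1 : Real.sin θ1 = Real.sqrt (1 - a ^ 2) := by rw [hθ1, Real.sin_arccos]
  have hsin2 : Real.sin θ2 = Real.sqrt (1 - b ^ 2) := by rw [hθ2, Real.sin_arccos]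
  set u : E := x - (a : ℝ) • y with hu
  set w : E := z - (b : ℝ) • y with hw
  have hay : ⟪x, y⟫_ℝ = a * ρ ^ 2 := by rw [hadef]; field_simp
  have hby : ⟪y, z⟫_ℝ = b * ρ ^ 2 := by rw [hbdef]; field_simp
  have hyy : ⟪y, y⟫_ℝ = ρ ^ 2 := by
    rw [real_inner_self_eq_norm_sq, hy]
  have hxx : ⟪x, x⟫_ℝ = ρ ^ 2 := by rw [real_inner_self_eq_norm_sq, hx]
  have hzz : ⟪z, z⟫_ℝ = ρ ^ 2 := by rw [real_inner_self_eq_norm_sq, hz]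
  have hya : ⟪y, x⟫_ℝ = a * ρ ^ 2 := by rw [real_inner_comm]; exact hay
  have hzy : ⟪z, y⟫_ℝ = b * ρ ^ 2 := by rw [real_inner_comm]; exact hby
  have hnu : ‖u‖ ^ 2 = ρ ^ 2 * (1 - a ^ 2) := by
    have h := @norm_sub_sq_real _ _ _ x ((a : ℝ) • y)
    rw [inner_smul_right, hay, norm_smul, Real.norm_eq_abs, hx, hy] at h
    rw [hu, h, mul_pow, sq_abs]; ring
  have hnw : ‖w‖ ^ 2 = ρ ^ 2 * (1 - b ^ 2) := by
    have h := @norm_sub_sq_real _ _ _ z ((b : ℝ) • y)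
    rw [inner_smul_right, hzy, norm_smul, Real.norm_eq_abs, hz, hy] at h
    rw [hw, h, mul_pow, sq_abs]; ring
  have hnu' : ‖u‖ = ρ * Real.sqrt (1 - a ^ 2) := by
    have h1 : ρ * Real.sqrt (1 - a ^ 2) = Real.sqrt (ρ ^ 2 * (1 - a ^ 2)) := by
      rw [Real.sqrt_mul (by positivity), Real.sqrt_sq hρ.le]
    rw [h1, ← hnu, Real.sqrt_sq (norm_nonneg _)]
  have hnw' : ‖w‖ = ρ * Real.sqrt (1 - b ^ 2) := by
    have h1 : ρ * Real.sqrt (1 - b ^ 2) = Real.sqrt (ρ ^ 2 * (1 - b ^ 2)) := by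
      rw [Real.sqrt_mul (by positivity), Real.sqrt_sq hρ.le]
    rw [h1, ← hnw, Real.sqrt_sq (norm_nonneg _)]
  have hinneruw : ⟪u, w⟫_ℝ = ⟪x, z⟫_ℝ - a * b * ρ ^ 2 := by
    rw [hu, hw]
    simp only [inner_sub_left, inner_sub_right, real_inner_smul_left, real_inner_smul_right]
    rw [hay, hby, hyy]
    ring
  have hCS : -(‖u‖ * ‖w‖) ≤ ⟪u, w⟫_ℝ := neg_le_of_abs_le (abs_real_inner_le_norm u w)
  have hkey : Real.cos (θ1 + θ2) ≤ c := by
    rw [Real.cos_add, hcos1, hcos2, hsin1, hsin2]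
    rw [hcdef, le_div_iff₀ hρ2]
    rw [hnu', hnw'] at hCS
    rw [hinneruw] at hCS
    nlinarith [hCS]
  have hmono := Real.monotone_arcsin hkey
  have harccos : Real.arccos c ≤ Real.arccos (Real.cos (θ1 + θ2)) := by
    simp only [Real.arccos]; linarith
  calc Real.arccos c ≤ Real.arccos (Real.cos (θ1 + θ2)) := harccos
    _ = θ1 + θ2 := Real.arccos_cos (by linarith) (by linarith)

end Aux

theorem stmt_8 {E : Type*} [NormedAddCommGroup E] [InnerProductSpace ℝ E]
    [FiniteDimensional ℝ E] (τ ρ v : ℝ) (hτ : 0 ≤ τ) (hρ : 0 < ρ) (hv : 0 < v)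
    (S : E) (γ V γ' : ℝ → E)
    (hdecomp : ∀ t ∈ Set.Icc (0 : ℝ) τ, γ t = S + V t)
    (horth : ∀ t ∈ Set.Icc (0 : ℝ) τ, ⟪S, V t⟫_ℝ = 0)
    (hVnorm : ∀ t ∈ Set.Icc (0 : ℝ) τ, ‖V t‖ = ρ)
    (hderiv : ∀ t ∈ Set.Icc (0 : ℝ) τ, HasDerivAt γ (γ' t) t)
    (hcont : ContinuousOn γ' (Set.Icc (0 : ℝ) τ))
    (hspeed : ∀ t ∈ Set.Icc (0 : ℝ) τ, ‖γ' t‖ ≤ v) :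
    τ ≥ (ρ / v) * Real.arccos (⟪V 0, V τ⟫_ℝ / ρ ^ 2) ∧
      ⟪V 0, V τ⟫_ℝ = ⟪γ 0, γ τ⟫_ℝ - ‖S‖ ^ 2 := by
  have h0mem : (0:ℝ) ∈ Set.Icc (0:ℝ) τ := ⟨le_refl 0, hτ⟩
  have hτmem : τ ∈ Set.Icc (0:ℝ) τ := ⟨hτ, le_refl τ⟩
  constructor
  · -- main inequality
    have hVd : ∀ t ∈ Set.Icc (0:ℝ) τ, HasDerivWithinAt V (γ' t) (Set.Icc (0:ℝ) τ) t := by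
      intro t ht
      have h1 : HasDerivAt (fun s => γ s - S) (γ' t) t := (hderiv t ht).sub_const S
      exact h1.hasDerivWithinAt.congr
        (fun s hs => by rw [hdecomp s hs]; abel)
        (by rw [hdecomp t ht]; abel)
    have hVcont : ContinuousOn V (Set.Icc (0:ℝ) τ) :=
      fun t ht => (hVd t ht).continuousWithinAt
    have hVlip : ∀ x ∈ Set.Icc (0:ℝ) τ, ∀ z ∈ Set.Icc (0:ℝ) τ, x ≤ z →
        ‖V z - V x‖ ≤ v * (z - x) := by
      intro x hx z hz hxz
      have hsub : Set.Icc x z ⊆ Set.Icc (0:ℝ) τ :=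
        Set.Icc_subset_Icc hx.1 hz.2
      have hd : ∀ s ∈ Set.Icc x z, HasDerivWithinAt V (γ' s) (Set.Icc x z) s :=
        fun s hs => (hVd s (hsub hs)).mono hsub
      have hb : ∀ s ∈ Set.Ico x z, ‖γ' s‖ ≤ v :=
        fun s hs => hspeed s (hsub (Set.Ico_subset_Icc_self hs))
      exact norm_image_sub_le_of_norm_deriv_le_segment' hd hb z ⟨hxz, le_refl z⟩
    set ψ : ℝ → ℝ := fun t => Real.arccos (⟪V 0, V t⟫_ℝ / ρ ^ 2) with hψdef
    have hψcont : ContinuousOn ψ (Set.Icc (0:ℝ) τ) := by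
      apply Real.continuous_arccos.comp_continuousOn
      exact (continuousOn_const.inner hVcont).div_const _
    have hψ0 : ψ 0 = 0 := by
      have : ⟪V 0, V 0⟫_ℝ = ρ ^ 2 := by
        rw [real_inner_self_eq_norm_sq, hVnorm 0 h0mem]
      rw [hψdef]; simp only [this]
      rw [div_self (by positivity)]
      exact Real.arccos_one
    -- fencing theorem
    have hmain : ∀ t ∈ Set.Icc (0:ℝ) τ, ψ t ≤ (v / ρ) * t := by
      have hB' : ∀ x ∈ Set.Ico (0:ℝ) τ,
          HasDerivWithinAt (fun t => (v / ρ) * t) (v / ρ) (Set.Ici x) x := by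
        intro x _
        simpa using (hasDerivWithinAt_id x (Set.Ici x)).const_mul (v / ρ)
      apply image_le_of_liminf_slope_right_le_deriv_boundary (B' := fun _ => v / ρ) hψcont
        (by rw [hψ0]; simp) (Continuous.continuousOn (by continuity)) hB'
      intro x hx r hr
      -- hr : v / ρ < r  (B' x is (v/ρ) * 1 or so; handled by congr_deriv above)
      set h : ℝ → ℝ := fun z => 2 * Real.arcsin (v * (z - x) / (2 * ρ)) with hhdef
      have hd : HasDerivAt h (v / ρ) x := by
        have hg : HasDerivAt (fun z => v * (z - x) / (2 * ρ)) (v / (2 * ρ)) x := by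
          have := (((hasDerivAt_id x).sub_const x).const_mul v).div_const (2 * ρ)
          simpa using this
        have ha : HasDerivAt Real.arcsin (1 / Real.sqrt (1 - (0:ℝ) ^ 2)) (0:ℝ) :=
          Real.hasDerivAt_arcsin (by norm_num) (by norm_num)
        have hval : v * (x - x) / (2 * ρ) = 0 := by ring
        have ha' : HasDerivAt Real.arcsin (1 / Real.sqrt (1 - (0:ℝ) ^ 2))
            (v * (x - x) / (2 * ρ)) := by rw [hval]; exact ha
        have hcomp := (ha'.comp x hg).const_mul (2:ℝ)
        simp only [Function.comp] at hcomp
        refine hcomp.congr_deriv ?_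
        symm
        rw [show (1:ℝ) - (0:ℝ)^2 = 1 by norm_num, Real.sqrt_one]
        rw [one_div_one, one_mul]
        field_simp
      have hslope : Filter.Tendsto (slope h x) (nhdsWithin x {x}ᶜ) (nhds (v / ρ)) :=
        hasDerivAt_iff_tendsto_slope.mp hd
      have hevent1 : ∀ᶠ z in nhdsWithin x (Set.Ioi x), slope h x z < r := by
        have h1 : ∀ᶠ z in nhdsWithin x {x}ᶜ, slope h x z < r :=
          hslope.eventually (gt_mem_nhds hr)
        exact h1.filter_mono (nhdsWithin_mono x (fun z hz => ne_of_gt hz))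
      have hevent2 : ∀ᶠ z in nhdsWithin x (Set.Ioi x), z ∈ Set.Ioc x τ :=
        Ioc_mem_nhdsGT_of_mem ⟨le_refl x, hx.2⟩
      refine ((hevent1.and hevent2).mono ?_).frequently
      rintro z ⟨hzr, hzmem⟩
      have hzx : 0 < z - x := by have := hzmem.1; linarith
      have hzicc : z ∈ Set.Icc (0:ℝ) τ := ⟨le_trans hx.1 hzmem.1.le, hzmem.2⟩
      have hxicc : x ∈ Set.Icc (0:ℝ) τ := ⟨hx.1, le_trans hx.2.le (le_refl τ)⟩
      -- triangle inequality
      have htri := arccos_triangle hρ (V 0) (V x) (V z)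
        (hVnorm 0 h0mem) (hVnorm x hxicc) (hVnorm z hzicc)
      have hchord := chord_angle hρ (V x) (V z) (hVnorm x hxicc) (hVnorm z hzicc)
      have hVzx : ‖V x - V z‖ ≤ v * (z - x) := by
        rw [norm_sub_rev]; exact hVlip x hxicc z hzicc hzmem.1.le
      have harcsinmono : Real.arcsin (‖V x - V z‖ / (2 * ρ)) ≤
          Real.arcsin (v * (z - x) / (2 * ρ)) := by
        apply Real.monotone_arcsin
        gcongr
      have hψz : ψ z ≤ ψ x + h z := by
        calc ψ z ≤ ψ x + Real.arccos (⟪V x, V z⟫_ℝ / ρ ^ 2) := htri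
          _ = ψ x + 2 * Real.arcsin (‖V x - V z‖ / (2 * ρ)) := by rw [hchord]
          _ ≤ ψ x + 2 * Real.arcsin (v * (z - x) / (2 * ρ)) := by linarith
          _ = ψ x + h z := rfl
      have hhx : h x = 0 := by
        rw [hhdef]; simp [Real.arcsin_zero]
      calc slope ψ x z = (ψ z - ψ x) / (z - x) := slope_def_field ψ x z
        _ ≤ (h z - h x) / (z - x) := by
            rw [hhx, sub_zero]
            gcongr
            linarith
        _ = slope h x z := (slope_def_field h x z).symm
        _ < r := hzr
    have hψτ : ψ τ ≤ (v / ρ) * τ := hmain τ hτmem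
    have hdiv : 0 < ρ / v := div_pos hρ hv
    have := mul_le_mul_of_nonneg_left hψτ hdiv.le
    have heq : (ρ / v) * ((v / ρ) * τ) = τ := by field_simp
    rw [heq] at this
    exact this
  · -- inner product identity
    rw [hdecomp 0 h0mem, hdecomp τ hτmem]
    rw [inner_add_left, inner_add_right, inner_add_right]
    rw [horth τ hτmem, real_inner_self_eq_norm_sq,
      show ⟪V 0, S⟫_ℝ = 0 from by rw [real_inner_comm]; exact horth 0 h0mem]
    ring
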